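/- In the setting of complete degree reduction: with N spins forming a complete graph with all internal couplings ≥ K_ext > 0, each vertex incident to at most t ≤ N/2 external edges each with edge influence magnitude at most K_ext, if 0 < F < N/2 then the energy change Δ from flipping F spins away from the majority sign satisfies Δ ≥ 2[K_ext·F(N−F) − ∑_{i=1}^F |P_i^min|] > 0, where |P_i^min| ≤ t·K_ext for each i. -/

import Mathlib

open Finset

/-- In the setting of complete degree reduction (complete graph
on `N` spins with internal couplings `≥ K_ext > 0`, each vertex incident to at
most `t ≤ N/2` external edges with per-vertex majority/minority influences
`a i`, `b i` satisfying `a i + b i ≤ t K_ext`), if `0 < F < N/2` then the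
energy change `Δ` from flipping `F` spins away from the majority sign
satisfies `Δ ≥ 2[K_ext F (N-F) − ∑_{i<F} b i] > 0`, and each `b i ≤ t K_ext`. -/
theorem degree_reduction_case1 (N F : ℕ) (hN : 2 ≤ N) (K t : ℝ)
    (hK : 0 < K) (ht : 0 < t) (htN : t ≤ (N : ℝ) / 2)
    (hF0 : 0 < F) (hF : 2 * F < N)
    (J : ℕ → ℕ → ℝ) (hJ : ∀ i j, K ≤ J i j)
    (a b : ℕ → ℝ) (ha : ∀ i, 0 ≤ a i) (hb : ∀ i, 0 ≤ b i)
    (hab : ∀ i, a i + b i ≤ t * K) :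
    2 * (K * (F : ℝ) * ((N : ℝ) - F) - ∑ i ∈ range F, b i) ≤
      2 * ((∑ i ∈ range F, ∑ j ∈ Ico F N, J i j)
        + ∑ i ∈ range F, a i - ∑ i ∈ range F, b i) ∧
    0 < 2 * ((∑ i ∈ range F, ∑ j ∈ Ico F N, J i j)
        + ∑ i ∈ range F, a i - ∑ i ∈ range F, b i) ∧
    ∀ i, b i ≤ t * K := by
  have hFle : F ≤ N := le_of_lt (lt_of_le_of_lt (Nat.le_mul_of_pos_left F two_pos) hF)
  have hJsum : K * (F : ℝ) * ((N : ℝ) - F) ≤ ∑ i ∈ range F, ∑ j ∈ Ico F N, J i j := by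
    have h1 : ∀ i ∈ range F, K * ((N : ℝ) - F) ≤ ∑ j ∈ Ico F N, J i j := by
      intro i _
      calc K * ((N : ℝ) - F) = (N - F : ℕ) * K := by
            rw [Nat.cast_sub hFle]; ring
        _ = ∑ _j ∈ Ico F N, K := by
            rw [Finset.sum_const, Nat.card_Ico, nsmul_eq_mul]
        _ ≤ ∑ j ∈ Ico F N, J i j := Finset.sum_le_sum fun j _ => hJ i j
    calc K * (F : ℝ) * ((N : ℝ) - F) = ∑ _i ∈ range F, K * ((N : ℝ) - F) := by
          rw [Finset.sum_const, card_range, nsmul_eq_mul]; ring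
      _ ≤ _ := Finset.sum_le_sum h1
  have hbtk : ∀ i, b i ≤ t * K := fun i => by
    have := hab i; have := ha i; linarith
  have hbsum : ∑ i ∈ range F, b i ≤ (F : ℝ) * (t * K) := by
    calc ∑ i ∈ range F, b i ≤ ∑ _i ∈ range F, t * K :=
          Finset.sum_le_sum fun i _ => hbtk i
      _ = (F : ℝ) * (t * K) := by rw [Finset.sum_const, card_range, nsmul_eq_mul]
  have hasum : 0 ≤ ∑ i ∈ range F, a i := Finset.sum_nonneg fun i _ => ha i
  have hFN : (F : ℝ) < (N : ℝ) / 2 := by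
    have : ((2 * F : ℕ) : ℝ) < (N : ℝ) := Nat.cast_lt.mpr hF
    push_cast at this; linarith
  have hpos : 0 < K * (F : ℝ) * ((N : ℝ) - F) - ∑ i ∈ range F, b i := by
    have hF0' : (0 : ℝ) < F := Nat.cast_pos.mpr hF0
    have ht' : t * K < ((N : ℝ) - F) * K := by
      apply mul_lt_mul_of_pos_right _ hK; linarith
    nlinarith
  refine ⟨by linarith, by linarith, hbtk⟩
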